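/- (Conservative variance estimation) Define V̂ = (1/N²)∑_{i=1}^N 1_{A_i}(1−π_i)(y_i/π_i)² + (1/N²)∑_{i=1}^N ∑_{j≠i, π_{ij}>0} 1_{A_i ∩ A_j} ((π_{ij} − π_i π_j)/π_{ij}) (y_i/π_i)(y_j/π_j) and Â = (1/N²)∑_{i=1}^N ∑_{j≠i, π_{ij}=0} [1_{A_i} y_i²/(2π_i) + 1_{A_j} y_j²/(2π_j)]. Then the estimator V̂ + Â is conservative: E[V̂ + Â] ≥ Var(Ŷ). -/

import Mathlib

open MeasureTheory

private lemma hIk_aux {Ω : Type*} [MeasurableSpace Ω] (P : Measure Ω)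
    (s : Set Ω) (hs : MeasurableSet s) (a : ℝ) :
    ∫ ω, s.indicator (fun _ => (1:ℝ)) ω * a ∂P = (P s).toReal * a := by
  rw [integral_mul_const, integral_indicator_const (1:ℝ) hs]
  simp [smul_eq_mul, Measure.real]

private lemma hInt_aux {Ω : Type*} [MeasurableSpace Ω] (P : Measure Ω) [IsFiniteMeasure P]
    (s : Set Ω) (hs : MeasurableSet s) :
    Integrable (s.indicator fun _ => (1:ℝ)) P := (integrable_const 1).indicator hs

private lemma ind_mul_aux {Ω : Type*} (s t : Set Ω) (ω : Ω) :
    (s ∩ t).indicator (fun _ => (1:ℝ)) ω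
      = s.indicator (fun _ => (1:ℝ)) ω * t.indicator (fun _ => (1:ℝ)) ω := by
  classical
  by_cases hs : ω ∈ s <;> by_cases ht : ω ∈ t <;>
    simp [Set.indicator, hs, ht, Set.mem_inter_iff]

/-- **Conservative variance estimation.**
With `V̂` the Horvitz–Thompson variance estimator restricted to pairs with `π_{ij} > 0`
and `Â = (1/N²) ∑ᵢ ∑_{j≠i, π_{ij}=0} [1_{Aᵢ} yᵢ²/(2πᵢ) + 1_{Aⱼ} yⱼ²/(2πⱼ)]`,
the estimator `V̂ + Â` is conservative: `E[V̂ + Â] ≥ Var(Ŷ)`. -/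
theorem conservative_variance_estimator
    {Ω : Type*} [MeasurableSpace Ω] (P : Measure Ω) [IsProbabilityMeasure P]
    (N : ℕ) (hN : 0 < N)
    (A : Fin N → Set Ω) (hA : ∀ i, MeasurableSet (A i))
    (y π : Fin N → ℝ) (πij : Fin N → Fin N → ℝ)
    (hπ : ∀ i, π i = (P (A i)).toReal) (hπpos : ∀ i, 0 < π i)
    (hπij : ∀ i j, i ≠ j → πij i j = (P (A i ∩ A j)).toReal)
    (Yhat Vhat Ahat : Ω → ℝ)
    (hY : Yhat = fun ω =>
      (1 / (N : ℝ)) * ∑ i, (A i).indicator (fun _ => (1 : ℝ)) ω * y i / π i)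
    (hV : Vhat = fun ω =>
      (1 / (N : ℝ) ^ 2) * ∑ i, (A i).indicator (fun _ => (1 : ℝ)) ω
          * (1 - π i) * (y i / π i) ^ 2
        + (1 / (N : ℝ) ^ 2) * ∑ i,
            ∑ j ∈ Finset.univ.filter (fun j => j ≠ i ∧ 0 < πij i j),
              (A i ∩ A j).indicator (fun _ => (1 : ℝ)) ω
                * ((πij i j - π i * π j) / πij i j) * (y i / π i) * (y j / π j))
    (hAhat : Ahat = fun ω =>
      (1 / (N : ℝ) ^ 2) * ∑ i,
        ∑ j ∈ Finset.univ.filter (fun j => j ≠ i ∧ πij i j = 0),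
          ((A i).indicator (fun _ => (1 : ℝ)) ω * y i ^ 2 / (2 * π i)
            + (A j).indicator (fun _ => (1 : ℝ)) ω * y j ^ 2 / (2 * π j))) :
    ∫ ω, (Vhat ω + Ahat ω) ∂P ≥ ∫ ω, (Yhat ω - ∫ x, Yhat x ∂P) ^ 2 ∂P := by
  classical
  have hπ0 : ∀ i, π i ≠ 0 := fun i => (hπpos i).ne'
  -- mean of Yhat
  have hmean : ∫ x, Yhat x ∂P = (1/(N:ℝ)) * ∑ i, y i := by
    simp only [hY, mul_div_assoc]
    rw [integral_const_mul, integral_finset_sum _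
      (fun i _ => (hInt_aux P _ (hA i)).mul_const (y i / π i))]
    congr 1
    refine Finset.sum_congr rfl fun i _ => ?_
    rw [hIk_aux P _ (hA i), ← hπ i]
    field_simp [hπ0 i]
  -- pointwise expansion of the squared deviation
  have hptsq : ∀ ω, (Yhat ω - ∫ x, Yhat x ∂P)^2
      = (1/(N:ℝ)^2) * ∑ i, ∑ j,
        ((A i ∩ A j).indicator (fun _ => (1:ℝ)) ω * ((y i/π i) * (y j/π j))
          - (A i).indicator (fun _ => (1:ℝ)) ω * ((y i/π i) * y j)
          - (A j).indicator (fun _ => (1:ℝ)) ω * (y i * (y j/π j))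
          + y i * y j) := by
    intro ω
    rw [hmean, hY]
    have h1 : (1/(N:ℝ)) * (∑ i, (A i).indicator (fun _ => (1:ℝ)) ω * y i / π i)
        - (1/(N:ℝ)) * ∑ i, y i
        = (1/(N:ℝ)) * ∑ i, ((A i).indicator (fun _ => (1:ℝ)) ω * (y i / π i) - y i) := by
      rw [← mul_sub, ← Finset.sum_sub_distrib]
      simp only [mul_div_assoc]
    rw [h1, mul_pow]
    have h2 : ((1:ℝ)/(N:ℝ))^2 = 1/(N:ℝ)^2 := by ring
    rw [h2]
    congr 1
    rw [sq, Finset.sum_mul_sum]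
    refine Finset.sum_congr rfl fun i _ => Finset.sum_congr rfl fun j _ => ?_
    rw [ind_mul_aux]
    ring
  -- integrability of each expanded term
  have hg_int : ∀ i j, Integrable (fun ω =>
      (A i ∩ A j).indicator (fun _ => (1:ℝ)) ω * ((y i/π i) * (y j/π j))
        - (A i).indicator (fun _ => (1:ℝ)) ω * ((y i/π i) * y j)
        - (A j).indicator (fun _ => (1:ℝ)) ω * (y i * (y j/π j))
        + y i * y j) P := fun i j =>
    ((((hInt_aux P _ ((hA i).inter (hA j))).mul_const _).sub
      ((hInt_aux P _ (hA i)).mul_const _)).sub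
      ((hInt_aux P _ (hA j)).mul_const _)).add (integrable_const _)
  have hgval : ∀ i j, (∫ ω,
      ((A i ∩ A j).indicator (fun _ => (1:ℝ)) ω * ((y i/π i) * (y j/π j))
        - (A i).indicator (fun _ => (1:ℝ)) ω * ((y i/π i) * y j)
        - (A j).indicator (fun _ => (1:ℝ)) ω * (y i * (y j/π j))
        + y i * y j) ∂P)
      = (y i/π i) * (y j/π j) * (P (A i ∩ A j)).toReal - y i * y j := by
    intro i j
    have h1 : Integrable (fun ω => (A i ∩ A j).indicator (fun _ => (1:ℝ)) ω * ((y i/π i) * (y j/π j))) P :=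
      (hInt_aux P _ ((hA i).inter (hA j))).mul_const _
    have h2 : Integrable (fun ω => (A i).indicator (fun _ => (1:ℝ)) ω * ((y i/π i) * y j)) P :=
      (hInt_aux P _ (hA i)).mul_const _
    have h3 : Integrable (fun ω => (A j).indicator (fun _ => (1:ℝ)) ω * (y i * (y j/π j))) P :=
      (hInt_aux P _ (hA j)).mul_const _
    have h12 : Integrable (fun ω => (A i ∩ A j).indicator (fun _ => (1:ℝ)) ω * ((y i/π i) * (y j/π j))
        - (A i).indicator (fun _ => (1:ℝ)) ω * ((y i/π i) * y j)) P := h1.sub h2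
    have h123 : Integrable (fun ω => (A i ∩ A j).indicator (fun _ => (1:ℝ)) ω * ((y i/π i) * (y j/π j))
        - (A i).indicator (fun _ => (1:ℝ)) ω * ((y i/π i) * y j)
        - (A j).indicator (fun _ => (1:ℝ)) ω * (y i * (y j/π j))) P := h12.sub h3
    rw [integral_add h123 (integrable_const _), integral_sub h12 h3, integral_sub h1 h2,
      hIk_aux P _ ((hA i).inter (hA j)), hIk_aux P _ (hA i), hIk_aux P _ (hA j),
      integral_const, ← hπ i, ← hπ j]
    simp only [measure_univ, probReal_univ, ENNReal.toReal_one, smul_eq_mul, one_mul]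
    field_simp [hπ0 i, hπ0 j]
    ring
  -- value of the RHS
  have hRHS : ∫ ω, (Yhat ω - ∫ x, Yhat x ∂P)^2 ∂P
      = (1/(N:ℝ)^2) * ∑ i, ∑ j,
          ((y i/π i) * (y j/π j) * (P (A i ∩ A j)).toReal - y i * y j) := by
    simp only [hptsq]
    rw [integral_const_mul, integral_finset_sum _
      (fun i _ => integrable_finset_sum _ (fun j _ => hg_int i j))]
    congr 1
    refine Finset.sum_congr rfl fun i _ => ?_
    rw [integral_finset_sum _ (fun j _ => hg_int i j)]
    exact Finset.sum_congr rfl fun j _ => hgval i j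
  -- value of ∫ Vhat
  have hVint1 : ∀ i, Integrable (fun ω =>
      (A i).indicator (fun _ => (1:ℝ)) ω * (1 - π i) * (y i / π i)^2) P :=
    fun i => ((hInt_aux P _ (hA i)).mul_const _).mul_const _
  have hVint2 : ∀ i j, Integrable (fun ω =>
      (A i ∩ A j).indicator (fun _ => (1:ℝ)) ω
        * ((πij i j - π i * π j)/πij i j) * (y i/π i) * (y j/π j)) P :=
    fun i j => (((hInt_aux P _ ((hA i).inter (hA j))).mul_const _).mul_const _).mul_const _
  have hVintA : Integrable Vhat P := by
    rw [hV]
    exact ((integrable_finset_sum _ (fun i _ => hVint1 i)).const_mul _).add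
      ((integrable_finset_sum _ (fun i _ => integrable_finset_sum _
        (fun j _ => hVint2 i j))).const_mul _)
  have hVval : ∫ ω, Vhat ω ∂P
      = (1/(N:ℝ)^2) * ∑ i, π i * (1 - π i) * (y i/π i)^2
        + (1/(N:ℝ)^2) * ∑ i, ∑ j ∈ Finset.univ.filter (fun j => j ≠ i ∧ 0 < πij i j),
            (πij i j - π i * π j) * ((y i/π i) * (y j/π j)) := by
    rw [hV, integral_add ((integrable_finset_sum _ (fun i _ => hVint1 i)).const_mul _)
      ((integrable_finset_sum _ (fun i _ => integrable_finset_sum _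
        (fun j _ => hVint2 i j))).const_mul _)]
    congr 1
    · rw [integral_const_mul, integral_finset_sum _ (fun i _ => hVint1 i)]
      congr 1
      refine Finset.sum_congr rfl fun i _ => ?_
      simp only [mul_assoc]
      rw [hIk_aux P _ (hA i), ← hπ i]
    · rw [integral_const_mul, integral_finset_sum _
        (fun i _ => integrable_finset_sum _ (fun j _ => hVint2 i j))]
      congr 1
      refine Finset.sum_congr rfl fun i _ => ?_
      rw [integral_finset_sum _ (fun j _ => hVint2 i j)]
      refine Finset.sum_congr rfl fun j hj => ?_
      rw [Finset.mem_filter] at hj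
      obtain ⟨-, hji, hijpos⟩ := hj
      simp only [mul_assoc]
      rw [hIk_aux P _ ((hA i).inter (hA j)), ← hπij i j (Ne.symm hji)]
      have hne : πij i j ≠ 0 := ne_of_gt hijpos
      field_simp [hne, hπ0 i, hπ0 j]
  -- value of ∫ Ahat
  have hAint : ∀ i j, Integrable (fun ω =>
      (A i).indicator (fun _ => (1:ℝ)) ω * y i ^ 2 / (2 * π i)
        + (A j).indicator (fun _ => (1:ℝ)) ω * y j ^ 2 / (2 * π j)) P :=
    fun i j => (((hInt_aux P _ (hA i)).mul_const _).div_const _).add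
      (((hInt_aux P _ (hA j)).mul_const _).div_const _)
  have hAintA : Integrable Ahat P := by
    rw [hAhat]
    exact (integrable_finset_sum _ (fun i _ => integrable_finset_sum _
      (fun j _ => hAint i j))).const_mul _
  have hAval : ∫ ω, Ahat ω ∂P
      = (1/(N:ℝ)^2) * ∑ i, ∑ j ∈ Finset.univ.filter (fun j => j ≠ i ∧ πij i j = 0),
          (y i ^ 2 / 2 + y j ^ 2 / 2) := by
    rw [hAhat, integral_const_mul, integral_finset_sum _
      (fun i _ => integrable_finset_sum _ (fun j _ => hAint i j))]
    congr 1
    refine Finset.sum_congr rfl fun i _ => ?_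
    rw [integral_finset_sum _ (fun j _ => hAint i j)]
    refine Finset.sum_congr rfl fun j _ => ?_
    rw [integral_add (((hInt_aux P _ (hA i)).mul_const _).div_const _)
      (((hInt_aux P _ (hA j)).mul_const _).div_const _)]
    simp only [mul_div_assoc]
    rw [hIk_aux P _ (hA i), hIk_aux P _ (hA j), ← hπ i, ← hπ j]
    field_simp [hπ0 i, hπ0 j]
  -- the core algebraic inequality
  have key : (∑ i, ∑ j, ((y i/π i) * (y j/π j) * (P (A i ∩ A j)).toReal - y i * y j))
      ≤ ∑ i, (π i * (1 - π i) * (y i/π i)^2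
          + (∑ j ∈ Finset.univ.filter (fun j => j ≠ i ∧ 0 < πij i j),
              (πij i j - π i * π j) * ((y i/π i) * (y j/π j))
            + ∑ j ∈ Finset.univ.filter (fun j => j ≠ i ∧ πij i j = 0),
              (y i ^ 2 / 2 + y j ^ 2 / 2))) := by
    refine Finset.sum_le_sum fun i _ => ?_
    set f : Fin N → ℝ := fun j => (y i/π i) * (y j/π j) * (P (A i ∩ A j)).toReal - y i * y j
      with hf
    have hsplit : (∑ j, f j) = f i + ∑ j ∈ Finset.univ.erase i, f j :=
      (Finset.add_sum_erase _ f (Finset.mem_univ i)).symm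
    have hsplit2 : (∑ j ∈ Finset.univ.erase i, f j)
        = ∑ j ∈ (Finset.univ.erase i).filter (fun j => 0 < πij i j), f j
          + ∑ j ∈ (Finset.univ.erase i).filter (fun j => ¬ 0 < πij i j), f j :=
      (Finset.sum_filter_add_sum_filter_not _ _ f).symm
    have hfe1 : (Finset.univ.erase i).filter (fun j => 0 < πij i j)
        = Finset.univ.filter (fun j => j ≠ i ∧ 0 < πij i j) := by
      rw [← Finset.filter_ne', Finset.filter_filter]
    have hfe2 : (Finset.univ.erase i).filter (fun j => ¬ 0 < πij i j)
        = Finset.univ.filter (fun j => j ≠ i ∧ πij i j = 0) := by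
      rw [← Finset.filter_ne', Finset.filter_filter]
      refine Finset.filter_congr fun j _ => ?_
      constructor
      · rintro ⟨hji, hnpos⟩
        refine ⟨hji, le_antisymm (not_lt.mp hnpos) ?_⟩
        rw [hπij i j (Ne.symm hji)]
        exact ENNReal.toReal_nonneg
      · rintro ⟨hji, hz⟩
        exact ⟨hji, by rw [hz]; exact lt_irrefl 0⟩
    rw [hsplit, hsplit2, hfe1, hfe2]
    have hdiag : f i = π i * (1 - π i) * (y i/π i)^2 := by
      have : A i ∩ A i = A i := Set.inter_self _
      rw [hf]
      simp only [this, ← hπ i]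
      field_simp [hπ0 i]
    have hpos_eq : (∑ j ∈ Finset.univ.filter (fun j => j ≠ i ∧ 0 < πij i j), f j)
        = ∑ j ∈ Finset.univ.filter (fun j => j ≠ i ∧ 0 < πij i j),
            (πij i j - π i * π j) * ((y i/π i) * (y j/π j)) := by
      refine Finset.sum_congr rfl fun j hj => ?_
      rw [Finset.mem_filter] at hj
      obtain ⟨-, hji, -⟩ := hj
      rw [hf]
      simp only [← hπij i j (Ne.symm hji)]
      field_simp [hπ0 i, hπ0 j]
    have hzero_le : (∑ j ∈ Finset.univ.filter (fun j => j ≠ i ∧ πij i j = 0), f j)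
        ≤ ∑ j ∈ Finset.univ.filter (fun j => j ≠ i ∧ πij i j = 0),
            (y i ^ 2 / 2 + y j ^ 2 / 2) := by
      refine Finset.sum_le_sum fun j hj => ?_
      rw [Finset.mem_filter] at hj
      obtain ⟨-, hji, hz⟩ := hj
      rw [hf]
      simp only [← hπij i j (Ne.symm hji), hz]
      nlinarith [sq_nonneg (y i + y j)]
    rw [hdiag, hpos_eq]
    exact add_le_add_right (add_le_add_right hzero_le _) _
  -- conclude
  rw [ge_iff_le, integral_add hVintA hAintA, hVval, hAval, hRHS]
  have hsum : (1/(N:ℝ)^2) * ∑ i, π i * (1 - π i) * (y i/π i)^2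
      + (1/(N:ℝ)^2) * ∑ i, ∑ j ∈ Finset.univ.filter (fun j => j ≠ i ∧ 0 < πij i j),
          (πij i j - π i * π j) * ((y i/π i) * (y j/π j))
      + (1/(N:ℝ)^2) * ∑ i, ∑ j ∈ Finset.univ.filter (fun j => j ≠ i ∧ πij i j = 0),
          (y i ^ 2 / 2 + y j ^ 2 / 2)
      = (1/(N:ℝ)^2) * ∑ i, (π i * (1 - π i) * (y i/π i)^2
          + (∑ j ∈ Finset.univ.filter (fun j => j ≠ i ∧ 0 < πij i j),
              (πij i j - π i * π j) * ((y i/π i) * (y j/π j))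
            + ∑ j ∈ Finset.univ.filter (fun j => j ≠ i ∧ πij i j = 0),
              (y i ^ 2 / 2 + y j ^ 2 / 2))) := by
    rw [Finset.sum_add_distrib]
    rw [Finset.sum_add_distrib]
    ring
  rw [hsum]
  have hc : (0:ℝ) ≤ 1/(N:ℝ)^2 := by positivity
  exact mul_le_mul_of_nonneg_left key hc
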